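/- For every finite word w = (w₀,…,w_{n−1}) ∈ (Fin 4)^n, the cylinder piece Q_w := π({x ∈ (Fin 4)^ℕ : x k = w k for all k < n}) equals S_{w₀}∘S_{w₁}∘⋯∘S_{w_{n−1}}(K_α), is contained in the closed axis-parallel square of center c_w = ∑_{k<n} α^k • v(w k) and sidelength α^n, and has diameter at most √2·α^n; moreover, for two distinct words w ≠ w' of the same length n, the distance between Q_w and Q_{w'} is at least (1−2α)·α^{n−1}. -/

import Mathlib

/-- The four corner vectors `(±(1-α)/2, ±(1-α)/2)` of the 4-corner Cantor construction. -/
noncomputable def cornerV (α : ℝ) : Fin 4 → EuclideanSpace ℝ (Fin 2) := fun i =>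
  (WithLp.equiv 2 (Fin 2 → ℝ)).symm
    ![if (i : ℕ) % 2 = 0 then (1 - α) / 2 else -((1 - α) / 2),
      if (i : ℕ) < 2 then (1 - α) / 2 else -((1 - α) / 2)]

/-- The coding map `π(x) = ∑ αⁿ • v (x n)` of the 4-corner Cantor set. -/
noncomputable def cantorPi (α : ℝ) (x : ℕ → Fin 4) : EuclideanSpace ℝ (Fin 2) :=
  ∑' n : ℕ, α ^ n • cornerV α (x n)

/-- The contracting similarity `S_i(z) = v i + α • z`. -/
noncomputable def simS (α : ℝ) (i : Fin 4) (z : EuclideanSpace ℝ (Fin 2)) :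
    EuclideanSpace ℝ (Fin 2) :=
  cornerV α i + α • z

/-- The composition `S_{w₀} ∘ S_{w₁} ∘ ⋯ ∘ S_{w_{n-1}}` associated to a finite word `w`. -/
noncomputable def wordMap (α : ℝ) : {n : ℕ} → (Fin n → Fin 4) →
    EuclideanSpace ℝ (Fin 2) → EuclideanSpace ℝ (Fin 2)
  | 0, _ => id
  | (_ + 1), w => simS α (w 0) ∘ wordMap α (fun k => w k.succ)

/-- The cylinder piece `Q_w = π({x : x k = w k for all k < n})`. -/
noncomputable def cylPiece (α : ℝ) {n : ℕ} (w : Fin n → Fin 4) :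
    Set (EuclideanSpace ℝ (Fin 2)) :=
  cantorPi α '' {x : ℕ → Fin 4 | ∀ k : Fin n, x k = w k}

/-- The center `c_w = ∑_{k<n} α^k • v (w k)` of the cylinder piece `Q_w`. -/
noncomputable def cylCenter (α : ℝ) {n : ℕ} (w : Fin n → Fin 4) :
    EuclideanSpace ℝ (Fin 2) :=
  ∑ k : Fin n, α ^ (k : ℕ) • cornerV α (w k)

section Aux

variable {α : ℝ}

lemma corner_abs (h1 : α < 1) (a : Fin 4) (i : Fin 2) : |cornerV α a i| = (1 - α) / 2 := by
  have h : (0:ℝ) ≤ (1 - α) / 2 := by linarith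
  fin_cases a <;> fin_cases i <;>
    simp [cornerV, abs_of_nonneg h]

lemma summable_coord (hα : α ∈ Set.Ioo (0:ℝ) (1/2)) (f : ℕ → ℝ) (C : ℝ)
    (hf : ∀ k, |f k| ≤ C) : Summable (fun k => α ^ k * f k) := by
  apply Summable.of_norm_bounded (g := fun k => C * α ^ k)
  · exact (summable_geometric_of_lt_one hα.1.le (by linarith [hα.2])).mul_left C
  · intro k
    rw [Real.norm_eq_abs, abs_mul, abs_pow, abs_of_nonneg hα.1.le, mul_comm]
    exact mul_le_mul_of_nonneg_right (hf _) (pow_nonneg hα.1.le k)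

lemma summable_vec (hα : α ∈ Set.Ioo (0:ℝ) (1/2)) (x : ℕ → Fin 4) :
    Summable (fun k => α ^ k • cornerV α (x k)) := by
  obtain ⟨M, hM⟩ : ∃ M, ∀ i : Fin 4, ‖cornerV α i‖ ≤ M :=
    ⟨Finset.univ.sup' ⟨0, Finset.mem_univ 0⟩ fun i => ‖cornerV α i‖,
      fun i => Finset.le_sup' (fun j => ‖cornerV α j‖) (Finset.mem_univ i)⟩
  apply Summable.of_norm_bounded (g := fun k => M * α ^ k)
  · exact (summable_geometric_of_lt_one hα.1.le (by linarith [hα.2])).mul_left M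
  · intro k
    rw [norm_smul, norm_pow, Real.norm_eq_abs, abs_of_nonneg hα.1.le, mul_comm]
    exact mul_le_mul_of_nonneg_right (hM _) (pow_nonneg hα.1.le k)

lemma cantorPi_apply (hα : α ∈ Set.Ioo (0:ℝ) (1/2)) (x : ℕ → Fin 4) (i : Fin 2) :
    cantorPi α x i = ∑' k, α ^ k * cornerV α (x k) i := by
  have hproj : ∀ y : EuclideanSpace ℝ (Fin 2), EuclideanSpace.proj (𝕜 := ℝ) i y = y i :=
    fun y => rfl
  have h := (EuclideanSpace.proj (𝕜 := ℝ) i).map_tsum (summable_vec hα x)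
  simpa [cantorPi, hproj, PiLp.smul_apply, smul_eq_mul] using h

lemma tail_bound (hα : α ∈ Set.Ioo (0:ℝ) (1/2)) (C : ℝ) (hC : 0 ≤ C) (f : ℕ → ℝ)
    (hf : ∀ k, |f k| ≤ C) (n : ℕ) :
    |∑' k, α ^ (k + n) * f k| ≤ α ^ n * C * (1 - α)⁻¹ := by
  have hα1 : α < 1 := by linarith [hα.2]
  have hs : Summable (fun k => α ^ (k + n) * f k) := by
    have h := (summable_coord hα f C hf).mul_left (α ^ n)
    refine h.congr fun k => ?_
    rw [pow_add, mul_comm (α ^ k) (α ^ n), mul_assoc]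
  have hs2 : Summable (fun k : ℕ => α ^ n * C * α ^ k) :=
    (summable_geometric_of_lt_one hα.1.le hα1).mul_left _
  calc |∑' k, α ^ (k + n) * f k| ≤ ∑' k, |α ^ (k + n) * f k| := by
        have habs : Summable (fun k => ‖α ^ (k + n) * f k‖) := by
          simpa only [Real.norm_eq_abs] using hs.abs
        simpa only [Real.norm_eq_abs] using norm_tsum_le_tsum_norm habs
    _ ≤ ∑' k, α ^ n * C * α ^ k := by
        refine Summable.tsum_le_tsum (fun k => ?_) hs.abs hs2
        rw [abs_mul, abs_pow, abs_of_nonneg hα.1.le, pow_add, mul_comm (α ^ k) (α ^ n),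
          mul_assoc, mul_assoc]
        refine mul_le_mul_of_nonneg_left ?_ (pow_nonneg hα.1.le n)
        rw [mul_comm C (α ^ k)]
        exact mul_le_mul_of_nonneg_left (hf k) (pow_nonneg hα.1.le k)
    _ = α ^ n * C * (1 - α)⁻¹ := by
        rw [tsum_mul_left, tsum_geometric_of_lt_one hα.1.le hα1]

lemma cantorPi_shift (hα : α ∈ Set.Ioo (0:ℝ) (1/2)) (x : ℕ → Fin 4) :
    cantorPi α x = simS α (x 0) (cantorPi α fun k => x (k + 1)) := by
  have hs := summable_vec hα x
  rw [cantorPi, hs.tsum_eq_zero_add, pow_zero, one_smul]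
  have h : ∀ k : ℕ, α ^ (k + 1) • cornerV α (x (k + 1))
      = α • (α ^ k • cornerV α (x (k + 1))) := by
    intro k; rw [smul_smul, ← pow_succ']
  simp_rw [h]
  rw [Summable.tsum_const_smul α (summable_vec hα fun k => x (k + 1))]
  rfl

lemma part1 (hα : α ∈ Set.Ioo (0:ℝ) (1/2)) :
    ∀ (n : ℕ) (w : Fin n → Fin 4),
      cylPiece α w = wordMap α w '' Set.range (cantorPi α) := by
  intro n
  induction n with
  | zero =>
    intro w
    have h : {x : ℕ → Fin 4 | ∀ k : Fin 0, x k = w k} = Set.univ :=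
      Set.eq_univ_of_forall fun x k => k.elim0
    rw [cylPiece, h, Set.image_univ, show wordMap α w = id from rfl, Set.image_id]
  | succ n ih =>
    intro w
    have key : cylPiece α w = simS α (w 0) '' cylPiece α (fun k => w k.succ) := by
      ext z
      constructor
      · rintro ⟨x, hx, rfl⟩
        refine ⟨cantorPi α (fun k => x (k + 1)), ⟨fun k => x (k + 1), fun k => ?_, rfl⟩, ?_⟩
        · simpa [Fin.val_succ] using hx k.succ
        · have hx0 : x 0 = w 0 := by simpa using hx 0
          rw [← hx0, ← cantorPi_shift hα x]
      · rintro ⟨_, ⟨y, hy, rfl⟩, rfl⟩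
        refine ⟨fun j => Nat.casesOn j (w 0) y, fun k => ?_, ?_⟩
        · refine Fin.cases ?_ (fun j => ?_) k
          · simp
          · simpa [Fin.val_succ] using hy j
        · rw [cantorPi_shift hα (fun j => Nat.casesOn j (w 0) y)]
          rfl
    rw [key, ih, show wordMap α w = simS α (w 0) ∘ wordMap α (fun k => w k.succ) from rfl,
      Set.image_comp]

lemma cylCenter_apply (hα : α ∈ Set.Ioo (0:ℝ) (1/2)) {n : ℕ} (w : Fin n → Fin 4) (i : Fin 2) :
    cylCenter α w i = ∑ k : Fin n, α ^ (k : ℕ) * cornerV α (w k) i := by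
  have hproj : ∀ y : EuclideanSpace ℝ (Fin 2), EuclideanSpace.proj (𝕜 := ℝ) i y = y i :=
    fun y => rfl
  have h := map_sum (EuclideanSpace.proj (𝕜 := ℝ) i)
    (fun k : Fin n => α ^ (k : ℕ) • cornerV α (w k)) Finset.univ
  simpa [cylCenter, hproj, PiLp.smul_apply, smul_eq_mul] using h

lemma coord_dev (hα : α ∈ Set.Ioo (0:ℝ) (1/2)) {n : ℕ} (w : Fin n → Fin 4) (x : ℕ → Fin 4)
    (hx : ∀ k : Fin n, x k = w k) (i : Fin 2) :
    |cantorPi α x i - cylCenter α w i| ≤ α ^ n / 2 := by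
  have hα1 : α < 1 := by linarith [hα.2]
  have hb : ∀ k, |cornerV α (x k) i| ≤ (1 - α) / 2 := fun k => (corner_abs hα1 _ _).le
  have hs : Summable (fun k => α ^ k * cornerV α (x k) i) := summable_coord hα _ _ hb
  have hsplit := Summable.sum_add_tsum_nat_add (f := fun k => α ^ k * cornerV α (x k) i) n hs
  have hc : cylCenter α w i = ∑ k ∈ Finset.range n, α ^ k * cornerV α (x k) i := by
    rw [cylCenter_apply hα, ← Fin.sum_univ_eq_sum_range (fun k => α ^ k * cornerV α (x k) i) n]
    exact Finset.sum_congr rfl fun k _ => by rw [hx k]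
  rw [cantorPi_apply hα, hc, ← hsplit, add_sub_cancel_left]
  have ht := tail_bound hα ((1 - α) / 2) (by linarith) (fun k => cornerV α (x (k + n)) i)
    (fun k => hb _) n
  calc |∑' k, α ^ (k + n) * cornerV α (x (k + n)) i| ≤ α ^ n * ((1 - α) / 2) * (1 - α)⁻¹ := ht
    _ = α ^ n / 2 * ((1 - α) * (1 - α)⁻¹) := by ring
    _ = α ^ n / 2 := by rw [mul_inv_cancel₀ (by linarith : (1:ℝ) - α ≠ 0), mul_one]

lemma corner_diff (h0 : 0 < α) (h1 : α < 1) {a b : Fin 4} (hab : a ≠ b) :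
    ∃ i : Fin 2, |cornerV α a i - cornerV α b i| = 1 - α := by
  have h : (0:ℝ) ≤ 1 - α := by linarith
  fin_cases a <;> fin_cases b <;>
    first
      | (exact absurd rfl hab)
      | (refine ⟨0, ?_⟩
         simp (config := { decide := true }) only [cornerV, WithLp.equiv_symm_apply, WithLp.ofLp_toLp,
           Matrix.cons_val_zero, Matrix.cons_val_one, Matrix.head_cons, Fin.mk_zero, Fin.mk_one,
           Fin.val_zero, Fin.val_one, Nat.reduceMod, Nat.reduceLT, reduceIte, decide_eq_true_eq]
         rw [abs_eq h]
         first | (left; ring1) | (right; ring1))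
      | (refine ⟨1, ?_⟩
         simp (config := { decide := true }) only [cornerV, WithLp.equiv_symm_apply, WithLp.ofLp_toLp,
           Matrix.cons_val_zero, Matrix.cons_val_one, Matrix.head_cons, Fin.mk_zero, Fin.mk_one,
           Fin.val_zero, Fin.val_one, Nat.reduceMod, Nat.reduceLT, reduceIte, decide_eq_true_eq]
         rw [abs_eq h]
         first | (left; ring1) | (right; ring1))

end Aux

theorem stmt4 (α : ℝ) (hα : α ∈ Set.Ioo (0 : ℝ) (1 / 2)) (n : ℕ) (w : Fin n → Fin 4) :
    cylPiece α w = wordMap α w '' Set.range (cantorPi α) ∧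
    cylPiece α w ⊆
      {p : EuclideanSpace ℝ (Fin 2) | ∀ i : Fin 2, |p i - cylCenter α w i| ≤ α ^ n / 2} ∧
    Metric.diam (cylPiece α w) ≤ Real.sqrt 2 * α ^ n ∧
    ∀ w' : Fin n → Fin 4, w ≠ w' →
      ∀ p ∈ cylPiece α w, ∀ q ∈ cylPiece α w',
        (1 - 2 * α) * α ^ (n - 1) ≤ dist p q := by
  obtain ⟨hα0, hα2⟩ := hα
  have hα' : α ∈ Set.Ioo (0:ℝ) (1/2) := ⟨hα0, hα2⟩
  have hα1 : α < 1 := by linarith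
  have hsub : cylPiece α w ⊆
      {p : EuclideanSpace ℝ (Fin 2) | ∀ i : Fin 2, |p i - cylCenter α w i| ≤ α ^ n / 2} := by
    rintro p ⟨x, hx, rfl⟩ i
    exact coord_dev hα' w x hx i
  refine ⟨part1 hα' n w, hsub, ?_, ?_⟩
  · -- diameter
    apply Metric.diam_le_of_forall_dist_le (by positivity)
    intro p hp q hq
    have hcoord : ∀ i : Fin 2, dist (p i) (q i) ≤ α ^ n := by
      intro i
      have h1 := hsub hp i
      have h2 := hsub hq i
      rw [Real.dist_eq]
      calc |p i - q i| = |(p i - cylCenter α w i) - (q i - cylCenter α w i)| := by ring_nf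
        _ ≤ |p i - cylCenter α w i| + |q i - cylCenter α w i| := abs_sub _ _
        _ ≤ α ^ n / 2 + α ^ n / 2 := add_le_add h1 h2
        _ = α ^ n := by ring
    rw [EuclideanSpace.dist_eq]
    calc Real.sqrt (∑ i : Fin 2, dist (p i) (q i) ^ 2)
        ≤ Real.sqrt (∑ _i : Fin 2, (α ^ n) ^ 2) := by
          apply Real.sqrt_le_sqrt
          exact Finset.sum_le_sum fun i _ => pow_le_pow_left₀ dist_nonneg (hcoord i) 2
      _ = Real.sqrt (2 * (α ^ n) ^ 2) := by
          rw [Finset.sum_const]; norm_num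
      _ = Real.sqrt 2 * α ^ n := by
          rw [Real.sqrt_mul (by norm_num), Real.sqrt_sq (by positivity)]
  · -- separation
    intro w' hne p hp q hq
    obtain ⟨x, hx, rfl⟩ := hp
    obtain ⟨y, hy, rfl⟩ := hq
    cases n with
    | zero => exact absurd (funext fun k => k.elim0) hne
    | succ n =>
      obtain ⟨k0, hk0⟩ := Function.ne_iff.mp hne
      obtain ⟨m, hm, hmin⟩ :
          ∃ m : Fin (n + 1), w m ≠ w' m ∧ ∀ k : Fin (n + 1), k < m → w k = w' k := by
        classical
        have hs : (Finset.univ.filter (fun k => w k ≠ w' k)).Nonempty := ⟨k0, by simp [hk0]⟩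
        refine ⟨(Finset.univ.filter (fun k => w k ≠ w' k)).min' hs, ?_, ?_⟩
        · simpa using Finset.min'_mem _ hs
        · intro k hk
          by_contra hcon
          exact absurd (Finset.min'_le _ k (by simpa using hcon)) (not_le.mpr hk)
      obtain ⟨i, hi⟩ := corner_diff hα0 hα1 hm
      -- coordinate difference
      have hbx : ∀ k, |cornerV α (x k) i| ≤ (1 - α) / 2 := fun k => (corner_abs hα1 _ _).le
      have hby : ∀ k, |cornerV α (y k) i| ≤ (1 - α) / 2 := fun k => (corner_abs hα1 _ _).le
      set d : ℕ → ℝ := fun k => cornerV α (x k) i - cornerV α (y k) i with hd_def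
      have hdb : ∀ k, |d k| ≤ 1 - α := by
        intro k
        calc |d k| ≤ |cornerV α (x k) i| + |cornerV α (y k) i| := abs_sub _ _
          _ ≤ (1 - α) / 2 + (1 - α) / 2 := add_le_add (hbx k) (hby k)
          _ = 1 - α := by ring
      have hsd : Summable (fun k => α ^ k * d k) := summable_coord hα' _ _ hdb
      have hdiff : cantorPi α x i - cantorPi α y i = ∑' k, α ^ k * d k := by
        rw [cantorPi_apply hα', cantorPi_apply hα',
          ← Summable.tsum_sub (summable_coord hα' _ _ hbx) (summable_coord hα' _ _ hby)]
        congr 1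
        funext k
        rw [hd_def, mul_sub]
      have hd0 : ∀ j : ℕ, j < (m : ℕ) → d j = 0 := by
        intro j hj
        have hjn : j < n + 1 := lt_trans hj m.isLt
        have hlt : (⟨j, hjn⟩ : Fin (n + 1)) < m := hj
        have hxj : x j = w ⟨j, hjn⟩ := hx ⟨j, hjn⟩
        have hyj : y j = w' ⟨j, hjn⟩ := hy ⟨j, hjn⟩
        rw [hd_def]
        simp only []
        rw [hxj, hyj, hmin _ hlt, sub_self]
      have hsplit := Summable.sum_add_tsum_nat_add (f := fun k => α ^ k * d k) ((m : ℕ) + 1) hsd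
      have hfin : ∑ k ∈ Finset.range ((m : ℕ) + 1), α ^ k * d k = α ^ (m : ℕ) * d m := by
        rw [Finset.sum_range_succ, Finset.sum_eq_zero, zero_add]
        intro k hk
        rw [hd0 k (Finset.mem_range.mp hk), mul_zero]
      have hdm : |d (m : ℕ)| = 1 - α := by
        rw [hd_def]
        simp only []
        rw [hx m, hy m]
        exact hi
      set T : ℝ := ∑' k, α ^ (k + ((m : ℕ) + 1)) * d (k + ((m : ℕ) + 1)) with hT_def
      have hTb : |T| ≤ α ^ ((m : ℕ) + 1) := by
        have := tail_bound hα' (1 - α) (by linarith) (fun k => d (k + ((m : ℕ) + 1)))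
          (fun k => hdb _) ((m : ℕ) + 1)
        calc |T| ≤ α ^ ((m : ℕ) + 1) * (1 - α) * (1 - α)⁻¹ := this
          _ = α ^ ((m : ℕ) + 1) := by
            rw [mul_assoc, mul_inv_cancel₀ (by linarith : (1:ℝ) - α ≠ 0), mul_one]
      have hsum : cantorPi α x i - cantorPi α y i = α ^ (m : ℕ) * d m + T := by
        rw [hdiff, ← hsplit, hfin]
      have hlow : α ^ (m : ℕ) * (1 - 2 * α) ≤ |cantorPi α x i - cantorPi α y i| := by
        have habs : |α ^ (m : ℕ) * d (m : ℕ)| = α ^ (m : ℕ) * (1 - α) := by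
          rw [abs_mul, abs_pow, abs_of_nonneg hα0.le, hdm]
        have h3 : |α ^ (m : ℕ) * d (m : ℕ)| - |T| ≤ |α ^ (m : ℕ) * d (m : ℕ) + T| := by
          have h4 := abs_add_le (α ^ (m : ℕ) * d (m : ℕ) + T) (-T)
          simp only [add_neg_cancel_right, abs_neg] at h4
          linarith
        rw [hsum]
        have hpow : α ^ ((m : ℕ) + 1) = α * α ^ (m : ℕ) := by rw [pow_succ]; ring
        nlinarith [hTb, h3, habs]
      have hdist : |cantorPi α x i - cantorPi α y i| ≤ dist (cantorPi α x) (cantorPi α y) := by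
        rw [EuclideanSpace.dist_eq]
        have h1 : |cantorPi α x i - cantorPi α y i|
            = Real.sqrt (dist (cantorPi α x i) (cantorPi α y i) ^ 2) := by
          rw [Real.sqrt_sq dist_nonneg, Real.dist_eq]
        rw [h1]
        apply Real.sqrt_le_sqrt
        exact Finset.single_le_sum (f := fun j => dist (cantorPi α x j) (cantorPi α y j) ^ 2)
          (fun j _ => sq_nonneg _) (Finset.mem_univ i)
      have hmn : (m : ℕ) ≤ n := Nat.lt_succ_iff.mp m.isLt
      have hpowm : α ^ n ≤ α ^ (m : ℕ) := pow_le_pow_of_le_one hα0.le hα1.le hmn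
      have h12 : (0:ℝ) ≤ 1 - 2 * α := by linarith
      calc (1 - 2 * α) * α ^ (n + 1 - 1) = (1 - 2 * α) * α ^ n := by norm_num
        _ ≤ (1 - 2 * α) * α ^ (m : ℕ) := mul_le_mul_of_nonneg_left hpowm h12
        _ = α ^ (m : ℕ) * (1 - 2 * α) := by ring
        _ ≤ |cantorPi α x i - cantorPi α y i| := hlow
        _ ≤ dist (cantorPi α x) (cantorPi α y) := hdist
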